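/- For every N ≥ 3, the mesh of the unique strictly decreasing zero-mean solution of the recursion satisfies δ_N := max_{1 ≤ n ≤ N−1} (x_{N,n} − x_{N,n+1}) ≤ 2/√(log N). -/

import Mathlib

open Finset

/-- Partial sum `S_n = x_1 + ... + x_n`. -/
noncomputable def S (x : ℕ → ℝ) (n : ℕ) : ℝ := ∑ i ∈ Finset.Icc 1 n, x i

/-- `x_1, ..., x_N` is a solution of the recursion `x_{n+1} = x_n - 1/S_n`
with all relevant partial sums nonzero. -/
def IsSolution (N : ℕ) (x : ℕ → ℝ) : Prop :=
  ∀ n, 1 ≤ n → n ≤ N - 1 → S x n ≠ 0 ∧ x (n + 1) = x n - 1 / S x n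

/-- Zero-median property: the middle value is `0` when `N` is odd, and the two middle
values are negatives of each other when `N` is even. -/
def ZeroMedian (N : ℕ) (x : ℕ → ℝ) : Prop :=
  (Odd N → x ((N + 1) / 2) = 0) ∧ (Even N → x (N / 2) = - x (N / 2 + 1))
lemma S_succ (x : ℕ → ℝ) (n : ℕ) : S x (n+1) = S x n + x (n+1) := by
  unfold S
  rw [Finset.sum_Icc_succ_top (by omega : 1 ≤ n+1)]

lemma Spos (N : ℕ) (hN : 3 ≤ N) (x : ℕ → ℝ) (hsol : IsSolution N x)
    (hdec : ∀ n, 1 ≤ n → n < N → x (n + 1) < x n) :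
    ∀ n, 1 ≤ n → n ≤ N - 1 → 0 < S x n := by
  intro n h1 h2
  obtain ⟨hne, heq⟩ := hsol n h1 h2
  have hlt := hdec n h1 (by omega)
  rw [heq] at hlt
  have h : 0 < 1 / S x n := by linarith
  exact one_div_pos.mp h

lemma xmono {N : ℕ} {x : ℕ → ℝ} (hdec : ∀ n, 1 ≤ n → n < N → x (n + 1) < x n) :
    ∀ i j, 1 ≤ i → i ≤ j → j ≤ N → x j ≤ x i := by
  intro i j hi hij hjN
  induction j with
  | zero => omega
  | succ k ih =>
    rcases Nat.lt_or_ge i (k+1) with h | h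
    · have hk : x (k+1) < x k := hdec k (by omega) (by omega)
      exact le_trans hk.le (ih (by omega) (by omega))
    · have hik : i = k + 1 := by omega
      rw [hik]

lemma numaux (t : ℝ) (ht : 3 ≤ t) :
    (Real.log t / 2) * Real.exp (Real.log t / 4) ≤ t - 1 := by
  have hupos : 0 < Real.exp (Real.log t / 4) := Real.exp_pos _
  have hu4 : Real.exp (Real.log t / 4) ^ 4 = t := by
    rw [← Real.exp_nat_mul]
    push_cast
    rw [show (4:ℝ) * (Real.log t / 4) = Real.log t by ring, Real.exp_log (by linarith)]
  have hlogu : Real.log t / 4 ≤ Real.exp (Real.log t / 4) - 1 := by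
    have h := Real.log_le_sub_one_of_pos hupos
    rwa [Real.log_exp] at h
  have hul : (1.31:ℝ) ≤ Real.exp (Real.log t / 4) := by
    have h31 : (1.31:ℝ)^4 ≤ Real.exp (Real.log t / 4) ^ 4 := by
      rw [hu4]; norm_num; linarith
    exact le_of_pow_le_pow_left₀ (by norm_num) hupos.le h31
  generalize Real.exp (Real.log t / 4) = u at hupos hu4 hlogu hul ⊢
  have hpoly : 2*u^2 - 2*u ≤ u^4 - 1 := by nlinarith [sq_nonneg (u^2 - 1)]
  have h2 : (Real.log t / 2) * u ≤ 2*(u-1)*u := by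
    apply mul_le_mul_of_nonneg_right _ hupos.le
    linarith
  nlinarith

lemma key (N : ℕ) (hN : 3 ≤ N) (x : ℕ → ℝ)
    (hsol : IsSolution N x) (hdec : ∀ n, 1 ≤ n → n < N → x (n + 1) < x n)
    (hmean : ∑ i ∈ Finset.Icc 1 N, x i = 0) :
    Real.sqrt (Real.log N) / 2 ≤ x 1 := by
  have hSpos := Spos N hN x hsol hdec
  have hS1 : S x 1 = x 1 := by unfold S; simp
  have ha : 0 < x 1 := by have := hSpos 1 le_rfl (by omega); rwa [hS1] at this
  set a := x 1 with ha_def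
  set E : ℝ := Real.exp (a^2/2) with hE_def
  have hEpos : 0 < E := Real.exp_pos _
  have hE1 : 1 ≤ E := Real.one_le_exp (by positivity)
  -- energy monotonicity
  have energy : ∀ n, 1 ≤ n → n ≤ N - 1 →
      x n ^ 2 / 2 + Real.log (S x n) ≤ a ^ 2 / 2 + Real.log a := by
    intro n
    induction n with
    | zero => intro h1 h2; omega
    | succ k ih =>
      intro h1 h2
      rcases Nat.eq_or_lt_of_le h1 with h | h
      · have hk0 : k = 0 := by omega
        subst hk0
        rw [hS1]
      · have hk1 : 1 ≤ k := by omega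
        have hk2 : k ≤ N - 1 := by omega
        have prev := ih hk1 hk2
        obtain ⟨hne, heq⟩ := hsol k hk1 hk2
        have hSk : 0 < S x k := hSpos k hk1 hk2
        have hSk1 : 0 < S x (k+1) := hSpos (k+1) h1 h2
        have hrec : S x (k+1) = S x k + x (k+1) := S_succ x k
        have step : x (k+1) ^ 2 / 2 + Real.log (S x (k+1)) ≤
            x k ^ 2 / 2 + Real.log (S x k) := by
          have hq : 0 < S x (k+1) / S x k := by positivity
          have hlog := Real.log_le_sub_one_of_pos hq
          rw [Real.log_div hSk1.ne' hSk.ne'] at hlog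
          have hqe : S x (k+1) / S x k - 1 = x (k+1) * (1 / S x k) := by
            rw [hrec]; field_simp; ring
          rw [hqe] at hlog
          rw [heq] at hlog ⊢
          nlinarith [sq_nonneg (1 / S x k)]
        linarith
  -- S bounded above
  have hSb : ∀ n, 1 ≤ n → n ≤ N - 1 → S x n ≤ a * E := by
    intro n h1 h2
    have h := energy n h1 h2
    have hlog : Real.log (S x n) ≤ Real.log a + a^2/2 := by nlinarith [sq_nonneg (x n)]
    calc S x n = Real.exp (Real.log (S x n)) := (Real.exp_log (hSpos n h1 h2)).symm
    _ ≤ Real.exp (Real.log a + a^2/2) := Real.exp_le_exp.mpr hlog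
    _ = a * E := by rw [Real.exp_add, Real.exp_log ha]
  -- telescoping
  have htel : x 1 - x N = ∑ i ∈ Finset.range (N-1), (1 / S x (i+1)) := by
    have h := Finset.sum_range_sub' (fun i => x (i+1)) (N-1)
    rw [show N - 1 + 1 = N by omega] at h
    rw [← h]
    apply Finset.sum_congr rfl
    intro i hi
    rw [Finset.mem_range] at hi
    obtain ⟨_, heq⟩ := hsol (i+1) (by omega) (by omega)
    rw [heq]; ring
  have hsum : ((N:ℝ) - 1) * (1 / (a * E)) ≤ x 1 - x N := by
    rw [htel]
    have hb : ∀ i ∈ Finset.range (N-1), 1/(a*E) ≤ 1 / S x (i+1) := by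
      intro i hi
      rw [Finset.mem_range] at hi
      exact one_div_le_one_div_of_le (hSpos (i+1) (by omega) (by omega))
        (hSb (i+1) (by omega) (by omega))
    have := Finset.card_nsmul_le_sum (Finset.range (N-1)) (fun i => 1 / S x (i+1))
      (1/(a*E)) hb
    rw [Finset.card_range, nsmul_eq_mul] at this
    have hc : ((N - 1 : ℕ) : ℝ) = (N:ℝ) - 1 := by
      have : (1:ℕ) ≤ N := by omega
      push_cast [Nat.cast_sub this]
      ring
    rw [hc] at this
    exact this
  have hxN : x N = - S x (N-1) := by
    have h1 : S x N = S x (N-1) + x N := by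
      have := S_succ x (N-1); rwa [show N - 1 + 1 = N by omega] at this
    have h0 : S x N = 0 := hmean
    linarith
  have hub : x 1 - x N ≤ 2 * (a * E) := by
    have hb := hSb (N-1) (by omega) le_rfl
    rw [hxN]
    nlinarith
  have hmain : (N:ℝ) - 1 ≤ 2 * a^2 * E^2 := by
    have h1 : ((N:ℝ) - 1) * (1/(a*E)) ≤ 2 * (a*E) := le_trans hsum hub
    have hae : 0 < a * E := by positivity
    calc (N:ℝ)-1 = ((N:ℝ)-1) * (1/(a*E)) * (a*E) := by field_simp
    _ ≤ 2*(a*E)*(a*E) := mul_le_mul_of_nonneg_right h1 hae.le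
    _ = 2*a^2*E^2 := by ring
  -- contradiction
  by_contra hcon
  push_neg at hcon
  have hN3 : (3:ℝ) ≤ (N:ℝ) := by exact_mod_cast hN
  have hlogN : 0 < Real.log N := Real.log_pos (by linarith)
  have hsq := Real.sq_sqrt hlogN.le
  have hsnn := Real.sqrt_nonneg (Real.log N)
  have ha2 : a^2 < Real.log N / 4 := by nlinarith
  have hE2 : E^2 = Real.exp (a^2) := by
    rw [hE_def, ← Real.exp_nat_mul]
    congr 1; push_cast; ring
  have hstep1 : 2 * a^2 * E^2 < (Real.log N / 2) * Real.exp (Real.log N / 4) := by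
    rw [hE2]
    have e1 : Real.exp (a^2) < Real.exp (Real.log N / 4) := Real.exp_lt_exp.mpr ha2
    have h2a : 2*a^2 < Real.log N / 2 := by nlinarith
    have := mul_lt_mul'' h2a e1 (by positivity) (Real.exp_pos _).le
    linarith
  have hnum := numaux (N:ℝ) hN3
  linarith

/-- The mesh `δ_N = max_{1 ≤ n ≤ N-1} (x_{N,n} - x_{N,n+1})` of the unique strictly
decreasing zero-mean solution is at most `2 / √(log N)`. -/
theorem mesh_bound (N : ℕ) (hN : 3 ≤ N) (x : ℕ → ℝ)
    (hsol : IsSolution N x) (hdec : ∀ n, 1 ≤ n → n < N → x (n + 1) < x n)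
    (hmean : ∑ i ∈ Finset.Icc 1 N, x i = 0) :
    (Finset.Icc 1 (N - 1)).sup' (by rw [Finset.nonempty_Icc]; omega)
        (fun n => x n - x (n + 1)) ≤ 2 / Real.sqrt (Real.log N) := by
  have hN3 : (3:ℝ) ≤ (N:ℝ) := by exact_mod_cast hN
  have hlogN : 0 < Real.log N := Real.log_pos (by linarith)
  have hs : 0 < Real.sqrt (Real.log N) := Real.sqrt_pos.mpr hlogN
  have hSpos := Spos N hN x hsol hdec
  set L := Real.sqrt (Real.log N) / 2 with hL
  have hLpos : 0 < L := by positivity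
  have hka : L ≤ x 1 := key N hN x hsol hdec hmean
  -- the reversed sequence
  set y : ℕ → ℝ := fun j => - x (N + 1 - j) with hy
  have hSy : ∀ j, j ≤ N → S y j = S x (N - j) := by
    intro j hj
    have hre : ∑ i ∈ Finset.Icc 1 j, x (N + 1 - i) = ∑ k ∈ Finset.Icc (N - j + 1) N, x k := by
      apply Finset.sum_nbij' (fun i => N + 1 - i) (fun k => N + 1 - k)
      · intro a ha; rw [Finset.mem_Icc] at *; omega
      · intro a ha; rw [Finset.mem_Icc] at *; omega
      · intro a ha; rw [Finset.mem_Icc] at ha; omega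
      · intro a ha; rw [Finset.mem_Icc] at ha; omega
      · intro a ha; rfl
    have hsplit : S x (N - j) + (∑ k ∈ Finset.Icc (N - j + 1) N, x k) = S x N := by
      unfold S
      rw [← Finset.Ico_add_one_right_eq_Icc, ← Finset.Ico_add_one_right_eq_Icc, ← Finset.Ico_add_one_right_eq_Icc]
      exact Finset.sum_Ico_consecutive _ (by omega) (by omega)
    have hSN : S x N = 0 := hmean
    have : S y j = - ∑ k ∈ Finset.Icc (N - j + 1) N, x k := by
      unfold S
      rw [hy]
      rw [← hre]
      rw [← Finset.sum_neg_distrib]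
    rw [this]
    linarith
  have hsoly : IsSolution N y := by
    intro n h1 h2
    obtain ⟨hne, heq⟩ := hsol (N - n) (by omega) (by omega)
    have hSyn : S y n = S x (N - n) := hSy n (by omega)
    constructor
    · rw [hSyn]; exact (hSpos (N - n) (by omega) (by omega)).ne'
    · rw [hSyn]
      have e1 : N + 1 - (n+1) = N - n := by omega
      have e2 : N + 1 - n = (N - n) + 1 := by omega
      simp only [hy, e1, e2]
      rw [heq]; ring
  have hdecy : ∀ n, 1 ≤ n → n < N → y (n + 1) < y n := by
    intro n h1 h2
    have e1 : N + 1 - (n+1) = N - n := by omega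
    have e2 : N + 1 - n = (N - n) + 1 := by omega
    simp only [hy, e1, e2]
    have := hdec (N - n) (by omega) (by omega)
    linarith
  have hmeany : ∑ i ∈ Finset.Icc 1 N, y i = 0 := by
    have h := hSy N le_rfl
    simp only [Nat.sub_self] at h
    have h0 : S x 0 = 0 := by unfold S; simp
    rw [h0] at h
    exact h
  have hkb : L ≤ y 1 := key N hN y hsoly hdecy hmeany
  have hb : L ≤ S x (N - 1) := by
    have h := hSy 1 (by omega)
    rw [← h]
    have : S y 1 = y 1 := by unfold S; simp
    rw [this]
    exact hkb
  -- pointwise lower bound on S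
  have hSlow : ∀ n, 1 ≤ n → n ≤ N - 1 → L ≤ S x n := by
    intro n h1 h2
    rcases le_or_gt 0 (x n) with hx | hx
    · -- S x n ≥ x 1 ≥ L
      have hmem : 1 ∈ Finset.Icc 1 n := by rw [Finset.mem_Icc]; omega
      have : x 1 ≤ S x n := by
        apply Finset.single_le_sum _ hmem
        intro i hi
        rw [Finset.mem_Icc] at hi
        exact le_trans hx (xmono hdec i n hi.1 hi.2 (by omega))
      linarith
    · -- S x n ≥ S x (N-1) ≥ L
      have hsplit : S x n + (∑ k ∈ Finset.Icc (n + 1) (N-1), x k) = S x (N-1) := by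
        unfold S
        rw [← Finset.Ico_add_one_right_eq_Icc, ← Finset.Ico_add_one_right_eq_Icc, ← Finset.Ico_add_one_right_eq_Icc]
        exact Finset.sum_Ico_consecutive _ (by omega) (by omega)
      have hneg : ∑ k ∈ Finset.Icc (n + 1) (N-1), x k ≤ 0 := by
        apply Finset.sum_nonpos
        intro i hi
        rw [Finset.mem_Icc] at hi
        have := xmono hdec n i (by omega) (by omega) (by omega)
        linarith
      linarith
  -- conclude
  apply Finset.sup'_le
  intro n hn
  rw [Finset.mem_Icc] at hn
  obtain ⟨hne, heq⟩ := hsol n hn.1 hn.2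
  have hSn := hSlow n hn.1 hn.2
  have hgap : x n - x (n + 1) = 1 / S x n := by rw [heq]; ring
  rw [hgap]
  calc 1 / S x n ≤ 1 / L := one_div_le_one_div_of_le hLpos hSn
  _ = 2 / Real.sqrt (Real.log N) := by rw [hL, one_div_div]
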